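/- arXiv:1709.03398 — 4 statements merged into one kernel-verified Lean document; each statement's English description precedes it below -/
import Mathlib

section
/- ∏_{n≥0} [((n+1)(2n+1)) / ((n+2)(2n+3))]^{(-1)^{t_n}} = 1/2. -/
open Filter Finset Topology

/-- The Thue–Morse sequence: sum modulo 2 of the binary digits of `n`. -/
def tm (n : ℕ) : ℕ := (Nat.digits 2 n).sum % 2

namespace ProdD

noncomputable section

def e (n : ℕ) : ℝ := (-1 : ℝ) ^ (Nat.digits 2 n).sum

lemma e_eq_tm (n : ℕ) : e n = (-1 : ℝ) ^ tm n := by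
  unfold e tm
  conv_lhs => rw [← Nat.div_add_mod (Nat.digits 2 n).sum 2]
  rw [pow_add, pow_mul]
  norm_num

lemma e_zero : e 0 = 1 := by simp [e]

lemma e_even (n : ℕ) : e (2 * n) = e n := by
  rcases Nat.eq_zero_or_pos n with h | h
  · simp [h]
  · unfold e
    rw [Nat.digits_def' (b := 2) (by norm_num) (by omega)]
    have h1 : 2 * n % 2 = 0 := by omega
    have h2 : 2 * n / 2 = n := by omega
    rw [h1, h2, List.sum_cons]
    norm_num

lemma e_odd (n : ℕ) : e (2 * n + 1) = - e n := by
  unfold e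
  rw [Nat.digits_def' (b := 2) (by norm_num) (by omega)]
  have h1 : (2 * n + 1) % 2 = 1 := by omega
  have h2 : (2 * n + 1) / 2 = n := by omega
  rw [h1, h2, List.sum_cons, pow_add, pow_one]
  ring

lemma abs_e (n : ℕ) : |e n| = 1 := by
  unfold e
  rw [abs_pow, abs_neg, abs_one, one_pow]

def g (k : ℕ) : ℝ := Real.log ((k : ℝ) + 1) - Real.log (k : ℝ)

lemma g_nonneg (k : ℕ) : 0 ≤ g k := by
  rcases Nat.eq_zero_or_pos k with h | h
  · simp [g, h]
  · have hk : (0 : ℝ) < k := by exact_mod_cast h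
    have := Real.log_le_log hk (by linarith : (k : ℝ) ≤ (k : ℝ) + 1)
    simp [g]; linarith

lemma g_anti {j k : ℕ} (hj : 1 ≤ j) (hjk : j ≤ k) : g k ≤ g j := by
  have hj' : (0 : ℝ) < j := by exact_mod_cast hj
  have hk' : (0 : ℝ) < k := by exact_mod_cast lt_of_lt_of_le hj hjk
  have hjk' : (j : ℝ) ≤ k := by exact_mod_cast hjk
  unfold g
  rw [sub_le_sub_iff]
  rw [← Real.log_mul (by positivity) (by positivity), ← Real.log_mul (by positivity) (by positivity)]
  apply Real.log_le_log (by positivity)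
  nlinarith

lemma g_le (k : ℕ) (hk : 1 ≤ k) : g k ≤ 1 / k := by
  have hk' : (0 : ℝ) < k := by exact_mod_cast hk
  have h := Real.log_le_sub_one_of_pos (x := ((k : ℝ) + 1) / k) (by positivity)
  rw [Real.log_div (by positivity) (by positivity)] at h
  have h2 : ((k : ℝ) + 1) / k - 1 = 1 / k := by field_simp; ring
  unfold g; linarith

lemma g_tendsto : Tendsto g atTop (𝓝 0) := by
  apply squeeze_zero' (Eventually.of_forall g_nonneg)
    (by filter_upwards [eventually_ge_atTop 1] with k hk using g_le k hk)
  exact tendsto_one_div_atTop_nhds_zero_nat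

section Window

variable {u : ℕ → ℝ} (hu : Antitone u) (h0 : ∀ n, 0 ≤ u n)

include hu h0 in
lemma even_even (m : ℕ) : ∀ k, m ≤ k →
    |∑ n ∈ Ico (2 * m) (2 * k), e n * u n| ≤ u (2 * m) - u (2 * k) := by
  refine Nat.le_induction ?_ ?_
  · simp
  · intro k hk ih
    have h1 : 2 * m ≤ 2 * k := by omega
    have h2 : 2 * m ≤ 2 * k + 1 := by omega
    have hstep : (2 : ℕ) * (k + 1) = (2 * k + 1) + 1 := by ring
    rw [hstep, Finset.sum_Ico_succ_top h2, Finset.sum_Ico_succ_top h1, e_odd, e_even]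
    have hmono1 : u (2 * k + 1) ≤ u (2 * k) := hu (by omega)
    have hmono2 : u (2 * k + 1 + 1) ≤ u (2 * k + 1) := hu (by omega)
    have habs : |∑ n ∈ Ico (2 * m) (2 * k), e n * u n + e k * u (2 * k) + (- e k) * u (2 * k + 1)|
        ≤ |∑ n ∈ Ico (2 * m) (2 * k), e n * u n| + (u (2 * k) - u (2 * k + 1)) := by
      have heq : ∑ n ∈ Ico (2 * m) (2 * k), e n * u n + e k * u (2 * k) + (- e k) * u (2 * k + 1)
          = ∑ n ∈ Ico (2 * m) (2 * k), e n * u n + e k * (u (2 * k) - u (2 * k + 1)) := by ring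
      rw [heq]
      refine (abs_add_le _ _).trans ?_
      rw [abs_mul, abs_e, one_mul, abs_of_nonneg (sub_nonneg.mpr hmono1)]
    linarith

include hu h0 in
lemma even_any (m K : ℕ) (h : 2 * m ≤ K) :
    |∑ n ∈ Ico (2 * m) K, e n * u n| ≤ u (2 * m) := by
  rcases Nat.even_or_odd K with ⟨k, hk⟩ | ⟨k, hk⟩
  · have hK : K = 2 * k := by omega
    have hmk : m ≤ k := by omega
    have := even_even hu h0 m k hmk
    rw [hK]
    linarith [h0 (2 * k), this]
  · have hK : K = 2 * k + 1 := by omega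
    have hmk : m ≤ k := by omega
    have h1 : 2 * m ≤ 2 * k := by omega
    rw [hK, Finset.sum_Ico_succ_top h1]
    have habs := abs_add_le (∑ n ∈ Ico (2 * m) (2 * k), e n * u n) (e (2 * k) * u (2 * k))
    rw [abs_mul, abs_e, abs_of_nonneg (h0 _), one_mul] at habs
    have := even_even hu h0 m k hmk
    linarith

include hu h0 in
lemma window (M K : ℕ) (h : M ≤ K) :
    |∑ n ∈ Ico M K, e n * u n| ≤ 2 * u M := by
  rcases Nat.even_or_odd M with ⟨m, hm⟩ | ⟨m, hm⟩
  · have hM : M = 2 * m := by omega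
    subst hM
    have := even_any hu h0 m K h
    linarith [h0 (2 * m)]
  · have hM : M = 2 * m + 1 := by omega
    subst hM
    rcases eq_or_lt_of_le h with rfl | hlt
    · simp [h0 (2 * m + 1)]
    · have h2 : 2 * m + 2 ≤ K := by omega
      rw [Finset.sum_eq_sum_Ico_succ_bot hlt]
      have habs := abs_add_le (e (2 * m + 1) * u (2 * m + 1))
        (∑ n ∈ Ico (2 * m + 1 + 1) K, e n * u n)
      rw [abs_mul, abs_e, abs_of_nonneg (h0 _), one_mul] at habs
      have h3 : (2 : ℕ) * (m + 1) = 2 * m + 1 + 1 := by ring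
      have := even_any hu h0 (m + 1) K (by omega)
      rw [h3] at this
      have hmono : u (2 * m + 1 + 1) ≤ u (2 * m + 1) := hu (by omega)
      linarith

include hu h0 in
lemma exists_lim (hto : Tendsto u atTop (𝓝 0)) :
    ∃ L, Tendsto (fun N => ∑ n ∈ range N, e n * u n) atTop (𝓝 L) := by
  apply cauchySeq_tendsto_of_complete
  apply cauchySeq_of_le_tendsto_0 (fun N => 2 * u N)
  · intro n m N hn hm
    wlog hnm : m ≤ n generalizing n m
    · rw [dist_comm]; exact this m n hm hn (by omega)
    rw [Real.dist_eq, ← Finset.sum_Ico_eq_sub _ hnm]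
    calc |∑ i ∈ Ico m n, e i * u i| ≤ 2 * u m := window hu h0 m n hnm
    _ ≤ 2 * u N := by linarith [hu hm]
  · simpa using hto.const_mul 2

end Window

def A (N : ℕ) : ℝ := ∑ n ∈ range N, e n * g (2 * n + 1)
def B (N : ℕ) : ℝ := ∑ n ∈ range N, e n * g (2 * n + 2)
def D (N : ℕ) : ℝ := ∑ n ∈ range N, e n * g (n + 1)
def Q (N : ℕ) : ℝ := ∑ n ∈ Ico 1 N, e n * g (2 * n)
def R (N : ℕ) : ℝ := ∑ n ∈ Ico 1 N, e n * g n

lemma I3 : ∀ N, D (2 * N) = A N - B N := by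
  intro N
  induction N with
  | zero => simp [A, B, D]
  | succ N ih =>
    have hsplit : D (2 * (N + 1)) = D (2 * N) + e (2 * N) * g (2 * N + 1)
        + e (2 * N + 1) * g (2 * N + 2) := by
      simp only [D, show 2 * (N + 1) = (2 * N + 1) + 1 by ring, Finset.sum_range_succ]
    have hA : A (N + 1) = A N + e N * g (2 * N + 1) := by
      simp only [A, Finset.sum_range_succ]
    have hB : B (N + 1) = B N + e N * g (2 * N + 2) := by
      simp only [B, Finset.sum_range_succ]
    rw [hsplit, e_even, e_odd, ih, hA, hB]; ring

lemma gsplit {n : ℕ} (hn : 1 ≤ n) : g n = g (2 * n) + g (2 * n + 1) := by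
  have hn' : (0 : ℝ) < n := by exact_mod_cast hn
  unfold g
  push_cast
  have l1 : Real.log (2 * (n : ℝ) + 1 + 1) = Real.log 2 + Real.log ((n : ℝ) + 1) := by
    rw [show 2 * (n : ℝ) + 1 + 1 = 2 * ((n : ℝ) + 1) by ring,
      Real.log_mul (by norm_num) (by positivity)]
  have l2 : Real.log (2 * (n : ℝ)) = Real.log 2 + Real.log (n : ℝ) :=
    Real.log_mul (by norm_num) (by positivity)
  rw [l1, l2]; ring

lemma A_Ico (K : ℕ) (hK : 1 ≤ K) :
    A K = Real.log 2 + ∑ n ∈ Ico 1 K, e n * g (2 * n + 1) := by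
  rw [A, Finset.range_eq_Ico, Finset.sum_eq_sum_Ico_succ_bot hK]
  have h : e 0 * g (2 * 0 + 1) = Real.log 2 := by
    rw [e_zero]; simp [g]; norm_num
  rw [h]

lemma I4 (K : ℕ) (hK : 1 ≤ K) : R K = Q K + (A K - Real.log 2) := by
  have h1 : R K = Q K + ∑ n ∈ Ico 1 K, e n * g (2 * n + 1) := by
    rw [R, Q, ← Finset.sum_add_distrib]
    apply Finset.sum_congr rfl
    intro n hn
    rw [gsplit (Finset.mem_Ico.mp hn).1]; ring
  rw [h1, A_Ico K hK]; ring

lemma I5 : ∀ N, 1 ≤ N → R (2 * N) = Q N - A N := by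
  refine Nat.le_induction ?_ ?_
  · have hR : R (2 * 1) = e 1 * g 1 := by
      rw [R, show 2 * 1 = 2 by norm_num,
        Finset.sum_Ico_succ_top (by norm_num : (1 : ℕ) ≤ 1)]
      simp
    have he1 : e 1 = -1 := by
      have := e_odd 0; rw [e_zero] at this; simpa using this
    have hQ : Q 1 = 0 := by simp [Q]
    have hg1 : g 1 = Real.log 2 := by
      simp [g]; norm_num
    have hA : A 1 = Real.log 2 := by
      simp [A, Finset.sum_range_succ, e_zero, g]; norm_num
    rw [hR, he1, hQ, hA, hg1]
    ring
  · intro N hN ih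
    have h1 : (1 : ℕ) ≤ 2 * N := by omega
    have h2 : (1 : ℕ) ≤ 2 * N + 1 := by omega
    have hsplit : R (2 * (N + 1)) = R (2 * N) + e (2 * N) * g (2 * N)
        + e (2 * N + 1) * g (2 * N + 1) := by
      rw [R, show 2 * (N + 1) = (2 * N + 1) + 1 by ring, Finset.sum_Ico_succ_top h2,
        Finset.sum_Ico_succ_top h1, R]
    have hQ : Q (N + 1) = Q N + e N * g (2 * N) := by
      rw [Q, Q, Finset.sum_Ico_succ_top hN]
    have hA : A (N + 1) = A N + e N * g (2 * N + 1) := by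
      simp only [A, Finset.sum_range_succ]
    rw [hsplit, e_even, e_odd, ih, hQ, hA]; ring

lemma I6 (N : ℕ) (hN : 1 ≤ N) : A (2 * N) + A N - Real.log 2 = Q N - Q (2 * N) := by
  have h4 := I4 (2 * N) (by omega)
  have h5 := I5 N hN
  linarith

lemma tendsto_two_mul : Tendsto (fun N : ℕ => 2 * N) atTop atTop :=
  tendsto_atTop_mono (fun n => by simp only [id_eq]; omega) tendsto_id

def uQ (n : ℕ) : ℝ := if n = 0 then Real.log 2 else g (2 * n)

lemma g_le_log_two {k : ℕ} (hk : 2 ≤ k) : g k ≤ Real.log 2 := by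
  have h2 : g 2 ≤ Real.log 2 := by
    have h3 : Real.log 3 ≤ Real.log 4 := Real.log_le_log (by norm_num) (by norm_num)
    have h4 : Real.log (4 : ℝ) = Real.log 2 + Real.log 2 := by
      rw [show (4 : ℝ) = 2 * 2 by norm_num, Real.log_mul (by norm_num) (by norm_num)]
    have : g 2 = Real.log 3 - Real.log 2 := by simp [g]; norm_num
    linarith
  linarith [g_anti (j := 2) (by norm_num) hk]

lemma uQ_nonneg (n : ℕ) : 0 ≤ uQ n := by
  unfold uQ
  split
  · exact Real.log_nonneg (by norm_num)
  · exact g_nonneg _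

lemma uQ_anti : Antitone uQ := by
  intro a b hab
  unfold uQ
  by_cases hb : b = 0
  · have : a = 0 := by omega
    simp [hb, this]
  · simp only [hb, if_false]
    by_cases ha : a = 0
    · simp only [ha, if_true]
      exact g_le_log_two (by omega)
    · simp only [ha, if_false]
      exact g_anti (by omega) (by omega)

lemma uQ_tendsto : Tendsto uQ atTop (𝓝 0) := by
  have h : Tendsto (fun n => g (2 * n)) atTop (𝓝 0) :=
    g_tendsto.comp (tendsto_atTop_mono (fun n => by simp only [id_eq]; omega) tendsto_id)
  apply h.congr'
  filter_upwards [eventually_ge_atTop 1] with n hn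
  simp [uQ, show n ≠ 0 by omega]

lemma uA_anti : Antitone (fun n => g (2 * n + 1)) :=
  fun _ _ hab => g_anti (by omega) (by omega)

lemma uB_anti : Antitone (fun n => g (2 * n + 2)) :=
  fun _ _ hab => g_anti (by omega) (by omega)

lemma uD_anti : Antitone (fun n => g (n + 1)) :=
  fun _ _ hab => g_anti (by omega) (by omega)

lemma uA_tendsto : Tendsto (fun n => g (2 * n + 1)) atTop (𝓝 0) :=
  g_tendsto.comp (tendsto_atTop_mono (fun n => by simp only [id_eq]; omega) tendsto_id)

lemma uB_tendsto : Tendsto (fun n => g (2 * n + 2)) atTop (𝓝 0) :=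
  g_tendsto.comp (tendsto_atTop_mono (fun n => by simp only [id_eq]; omega) tendsto_id)

lemma uD_tendsto : Tendsto (fun n => g (n + 1)) atTop (𝓝 0) :=
  g_tendsto.comp (tendsto_atTop_mono (fun n => by simp only [id_eq]; omega) tendsto_id)

lemma Q_tail (N : ℕ) (hN : 1 ≤ N) : |Q (2 * N) - Q N| ≤ 2 * uQ N := by
  have hsplit : Q (2 * N) = Q N + ∑ n ∈ Ico N (2 * N), e n * g (2 * n) := by
    rw [Q, Q, Finset.sum_Ico_consecutive _ hN (by omega : N ≤ 2 * N)]
  have hcong : ∑ n ∈ Ico N (2 * N), e n * g (2 * n) = ∑ n ∈ Ico N (2 * N), e n * uQ n := by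
    apply Finset.sum_congr rfl
    intro n hn
    have : n ≠ 0 := by have := (Finset.mem_Ico.mp hn).1; omega
    simp [uQ, this]
  rw [hsplit, add_sub_cancel_left, hcong]
  exact window uQ_anti uQ_nonneg N (2 * N) (by omega)

lemma tendsto_A2A :
    ∃ a b d : ℝ, Tendsto A atTop (𝓝 a) ∧ Tendsto B atTop (𝓝 b) ∧ Tendsto D atTop (𝓝 d) ∧
      a + a = Real.log 2 ∧ d = a - b := by
  obtain ⟨a, ha⟩ : ∃ L, Tendsto A atTop (𝓝 L) :=
    exists_lim uA_anti (fun n => g_nonneg _) uA_tendsto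
  obtain ⟨b, hb⟩ : ∃ L, Tendsto B atTop (𝓝 L) :=
    exists_lim uB_anti (fun n => g_nonneg _) uB_tendsto
  obtain ⟨d, hd⟩ : ∃ L, Tendsto D atTop (𝓝 L) :=
    exists_lim uD_anti (fun n => g_nonneg _) uD_tendsto
  refine ⟨a, b, d, ha, hb, hd, ?_, ?_⟩
  · -- a + a = log 2
    have hsq : Tendsto (fun N => A (2 * N) + A N - Real.log 2) atTop (𝓝 0) := by
      apply squeeze_zero_norm' (a := fun N => 2 * uQ N)
      · filter_upwards [eventually_ge_atTop 1] with N hN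
        rw [Real.norm_eq_abs, I6 N hN]
        exact Q_tail N hN |>.trans_eq' (by rw [abs_sub_comm])
      · simpa using uQ_tendsto.const_mul 2
    have h1 : Tendsto (fun N => A (2 * N) + A N) atTop (𝓝 (Real.log 2)) := by
      have := hsq.add_const (Real.log 2)
      simpa using this
    have h2 : Tendsto (fun N => A (2 * N) + A N) atTop (𝓝 (a + a)) :=
      (ha.comp tendsto_two_mul).add ha
    exact tendsto_nhds_unique h2 h1
  · -- d = a - b
    have hDa : Tendsto (fun N => D (2 * N)) atTop (𝓝 d) := hd.comp tendsto_two_mul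
    have hDb : Tendsto (fun N => D (2 * N)) atTop (𝓝 (a - b)) :=
      (ha.sub hb).congr (fun N => (I3 N).symm)
    exact tendsto_nhds_unique hDa hDb

def xb (n : ℕ) : ℝ := (((n : ℝ) + 1) * (2 * (n : ℝ) + 1)) / (((n : ℝ) + 2) * (2 * (n : ℝ) + 3))

lemma xb_pos (n : ℕ) : 0 < xb n := by unfold xb; positivity

lemma LP_eq (N : ℕ) :
    ∑ n ∈ range N, e n * Real.log (xb n) = -(A N + B N + D N) := by
  have h : ∀ n : ℕ, e n * Real.log (xb n)
      = -(e n * g (2 * n + 1) + e n * g (2 * n + 2) + e n * g (n + 1)) := by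
    intro n
    have hlog : Real.log (xb n) = Real.log ((n : ℝ) + 1) + Real.log (2 * (n : ℝ) + 1)
        - (Real.log ((n : ℝ) + 2) + Real.log (2 * (n : ℝ) + 3)) := by
      unfold xb
      rw [Real.log_div (by positivity) (by positivity),
        Real.log_mul (by positivity) (by positivity),
        Real.log_mul (by positivity) (by positivity)]
    rw [hlog]
    unfold g
    push_cast
    ring
  rw [Finset.sum_congr rfl (fun n _ => h n)]
  simp only [A, B, D, ← Finset.sum_add_distrib, Finset.sum_neg_distrib]

lemma key : Tendsto (fun N => ∑ n ∈ range N, e n * Real.log (xb n)) atTop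
    (𝓝 (-Real.log 2)) := by
  obtain ⟨a, b, d, ha, hb, hd, haa, hdd⟩ := tendsto_A2A
  have hlim : Tendsto (fun N => -(A N + B N + D N)) atTop (𝓝 (-(a + b + d))) :=
    ((ha.add hb).add hd).neg
  have hval : -(a + b + d) = -Real.log 2 := by rw [hdd]; linarith
  rw [hval] at hlim
  exact hlim.congr (fun N => (LP_eq N).symm)

end
end ProdD

open ProdD

theorem prod_d :
    Tendsto (fun N => ∏ n ∈ Finset.range N,
        (((((n : ℝ) + 1) * (2 * (n : ℝ) + 1)) / (((n : ℝ) + 2) * (2 * (n : ℝ) + 3)))) ^ ((-1 : ℤ) ^ tm n))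
      atTop (𝓝 ((1 / 2 : ℝ))) := by
  have hP : ∀ N : ℕ, (∏ n ∈ Finset.range N,
      (((((n : ℝ) + 1) * (2 * (n : ℝ) + 1)) / (((n : ℝ) + 2) * (2 * (n : ℝ) + 3)))) ^ ((-1 : ℤ) ^ tm n))
      = Real.exp (∑ n ∈ range N, e n * Real.log (xb n)) := by
    intro N
    rw [Real.exp_sum]
    apply Finset.prod_congr rfl
    intro n _
    have hpos : (0 : ℝ) < xb n := xb_pos n
    have hzp : (0 : ℝ) < xb n ^ ((-1 : ℤ) ^ tm n) := zpow_pos hpos _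
    rw [show (((((n : ℝ) + 1) * (2 * (n : ℝ) + 1)) / (((n : ℝ) + 2) * (2 * (n : ℝ) + 3)))) ^ ((-1 : ℤ) ^ tm n)
        = xb n ^ ((-1 : ℤ) ^ tm n) from rfl]
    rw [← Real.exp_log hzp, Real.log_zpow]
    congr 1
    rw [e_eq_tm]
    push_cast
    ring
  have hcomp : Tendsto (fun N => Real.exp (∑ n ∈ range N, e n * Real.log (xb n))) atTop
      (𝓝 (Real.exp (-Real.log 2))) := (Real.continuous_exp.tendsto _).comp key
  have hfin : Real.exp (-Real.log 2) = (1 / 2 : ℝ) := by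
    rw [Real.exp_neg, Real.exp_log (by norm_num : (0:ℝ) < 2)]
    norm_num
  rw [hfin] at hcomp
  exact hcomp.congr (fun N => (hP N).symm)
end

section
/- ∏_{n≥0} [((n+1)(4n+5)) / ((n+2)(4n+3))]^{(-1)^{t_n}} = 1. -/
open Filter Finset Topology

/-- The sign `(-1)^{t_n}`. -/
noncomputable def tmE (n : ℕ) : ℝ := (-1 : ℝ) ^ tm n

/-- The auxiliary factor `g n = (2n+3)/(2n+4)`. -/
noncomputable def tmG (n : ℕ) : ℝ := (2 * (n : ℝ) + 3) / (2 * (n : ℝ) + 4)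

/-- `a n = ε_n log g n`. -/
noncomputable def tmA (n : ℕ) : ℝ := tmE n * Real.log (tmG n)

/-- Partial sums of `tmA`. -/
noncomputable def tmL (N : ℕ) : ℝ := ∑ n ∈ Finset.range N, tmA n

lemma tm_two_mul (n : ℕ) : tm (2 * n) = tm n := by
  rcases Nat.eq_zero_or_pos n with h | h
  · simp [h]
  · unfold tm
    rw [Nat.digits_def' (by norm_num : 1 < 2) (by omega : 0 < 2 * n)]
    simp [Nat.mul_div_cancel_left _ (by norm_num : 0 < 2), Nat.mul_mod_right]

lemma tm_two_mul_add_one (n : ℕ) : tm (2 * n + 1) = (1 + tm n) % 2 := by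
  unfold tm
  rw [Nat.digits_def' (by norm_num : 1 < 2) (by omega : 0 < 2 * n + 1)]
  have h1 : (2 * n + 1) % 2 = 1 := by omega
  have h2 : (2 * n + 1) / 2 = n := by omega
  rw [h1, h2, List.sum_cons]
  omega

lemma tm_lt_two (n : ℕ) : tm n < 2 := Nat.mod_lt _ (by norm_num)

lemma tmE_two_mul (n : ℕ) : tmE (2 * n) = tmE n := by
  unfold tmE; rw [tm_two_mul]

lemma tmE_two_mul_add_one (n : ℕ) : tmE (2 * n + 1) = -tmE n := by
  unfold tmE
  rw [tm_two_mul_add_one]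
  unfold tm
  rcases Nat.mod_two_eq_zero_or_one ((Nat.digits 2 n).sum) with h | h <;> rw [h] <;> norm_num

lemma tmG_pos (n : ℕ) : 0 < tmG n := by
  unfold tmG; positivity

lemma tmG_lt_one (n : ℕ) : tmG n < 1 := by
  unfold tmG
  rw [div_lt_one (by positivity)]
  linarith

lemma tmG_ne (n : ℕ) : tmG n ≠ 0 := (tmG_pos n).ne'

/-- The key algebraic identity: `f n = g n * g (2n+1) / g (2n)`. -/
lemma f_eq_g (n : ℕ) :
    (((n : ℝ) + 1) * (4 * (n : ℝ) + 5)) / (((n : ℝ) + 2) * (4 * (n : ℝ) + 3))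
      = tmG n * tmG (2 * n + 1) / tmG (2 * n) := by
  unfold tmG
  have h1 : (0:ℝ) < (n : ℝ) + 2 := by positivity
  have h2 : (0:ℝ) < 4 * (n : ℝ) + 3 := by positivity
  have h3 : (0:ℝ) < 2 * (2 * (n:ℝ)) + 3 := by positivity
  push_cast
  field_simp
  ring

lemma f_pos (n : ℕ) :
    0 < (((n : ℝ) + 1) * (4 * (n : ℝ) + 5)) / (((n : ℝ) + 2) * (4 * (n : ℝ) + 3)) := by
  positivity

/-- `x ^ ((-1)^s : ℤ)` as an exponential. -/
lemma zpow_neg_one_pow_eq_exp {x : ℝ} (hx : 0 < x) (s : ℕ) :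
    x ^ ((-1 : ℤ) ^ s) = Real.exp ((-1 : ℝ) ^ s * Real.log x) := by
  rcases Nat.even_or_odd s with hs | hs
  · rw [hs.neg_one_pow, hs.neg_one_pow, zpow_one, one_mul, Real.exp_log hx]
  · rw [hs.neg_one_pow, hs.neg_one_pow, zpow_neg_one, neg_one_mul, Real.exp_neg,
      Real.exp_log hx]

/-- Per-term logarithmic identity. -/
lemma log_f_eq (n : ℕ) :
    tmE n * Real.log ((((n : ℝ) + 1) * (4 * (n : ℝ) + 5)) / (((n : ℝ) + 2) * (4 * (n : ℝ) + 3)))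
      = tmA n - (tmA (2 * n) + tmA (2 * n + 1)) := by
  rw [f_eq_g, Real.log_div (mul_ne_zero (tmG_ne _) (tmG_ne _)) (tmG_ne _),
    Real.log_mul (tmG_ne _) (tmG_ne _)]
  unfold tmA
  rw [tmE_two_mul, tmE_two_mul_add_one]
  ring

lemma tmL_two_mul (N : ℕ) :
    tmL (2 * N) = ∑ n ∈ Finset.range N, (tmA (2 * n) + tmA (2 * n + 1)) := by
  induction N with
  | zero => simp [tmL]
  | succ N ih =>
      have h : 2 * (N + 1) = (2 * N + 1) + 1 := by ring
      rw [Finset.sum_range_succ, ← ih]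
      unfold tmL
      rw [h, Finset.sum_range_succ, Finset.sum_range_succ]
      ring

/-- The partial product equals `exp (L N - L (2N))`. -/
lemma prod_eq_exp (N : ℕ) :
    (∏ n ∈ Finset.range N,
        (((((n : ℝ) + 1) * (4 * (n : ℝ) + 5)) / (((n : ℝ) + 2) * (4 * (n : ℝ) + 3)))) ^ ((-1 : ℤ) ^ tm n))
      = Real.exp (tmL N - tmL (2 * N)) := by
  have h : ∀ n : ℕ, (((((n : ℝ) + 1) * (4 * (n : ℝ) + 5)) / (((n : ℝ) + 2) * (4 * (n : ℝ) + 3)))) ^ ((-1 : ℤ) ^ tm n)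
      = Real.exp (tmA n - (tmA (2 * n) + tmA (2 * n + 1))) := by
    intro n
    rw [zpow_neg_one_pow_eq_exp (f_pos n), ← log_f_eq n]
    rfl
  simp only [h, ← Real.exp_sum, Finset.sum_sub_distrib]
  rw [← tmL_two_mul]
  rfl

lemma abs_tmE (n : ℕ) : |tmE n| = 1 := by
  unfold tmE
  rcases Nat.even_or_odd (tm n) with hs | hs
  · rw [hs.neg_one_pow]; norm_num
  · rw [hs.neg_one_pow]; norm_num

lemma abs_log_tmG (n : ℕ) : |Real.log (tmG n)| ≤ 1 / (2 * (n : ℝ) + 3) := by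
  have h1 := tmG_pos n
  have h2 := tmG_lt_one n
  rw [abs_of_nonpos (Real.log_nonpos h1.le h2.le), ← Real.log_inv]
  have h3 : Real.log (tmG n)⁻¹ ≤ (tmG n)⁻¹ - 1 :=
    Real.log_le_sub_one_of_pos (by positivity)
  have h4 : (tmG n)⁻¹ - 1 = 1 / (2 * (n : ℝ) + 3) := by
    unfold tmG
    rw [inv_div]
    field_simp
    norm_num
  linarith

lemma abs_tmA (n : ℕ) : |tmA n| ≤ 1 / (2 * (n : ℝ) + 3) := by
  unfold tmA
  rw [abs_mul, abs_tmE, one_mul]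
  exact abs_log_tmG n

/-- The paired term bound. -/
lemma abs_pair (m : ℕ) :
    |tmA (2 * m) + tmA (2 * m + 1)| ≤ (2 / 9) * (1 / ((m : ℝ) + 1) ^ 2) := by
  have key : tmA (2 * m) + tmA (2 * m + 1)
      = tmE m * Real.log (tmG (2 * m) / tmG (2 * m + 1)) := by
    unfold tmA
    rw [tmE_two_mul, tmE_two_mul_add_one, Real.log_div (tmG_ne _) (tmG_ne _)]
    ring
  rw [key, abs_mul, abs_tmE, one_mul]
  set r : ℝ := tmG (2 * m) / tmG (2 * m + 1) with hr
  have hrpos : 0 < r := div_pos (tmG_pos _) (tmG_pos _)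
  have hx : (0:ℝ) ≤ (m : ℝ) := Nat.cast_nonneg m
  have hrinv : r⁻¹ - 1 = 2 / ((4 * (m:ℝ) + 3) * (4 * (m:ℝ) + 6)) := by
    rw [hr, inv_div]
    unfold tmG
    push_cast
    have h1 : (0:ℝ) < 4 * (m:ℝ) + 3 := by positivity
    have h2 : (0:ℝ) < 4 * (m:ℝ) + 6 := by positivity
    field_simp
    ring
  have hrle : r ≤ 1 := by
    rw [hr, div_le_one (tmG_pos _)]
    unfold tmG
    push_cast
    rw [div_le_div_iff₀ (by positivity) (by positivity)]
    nlinarith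
  rw [abs_of_nonpos (Real.log_nonpos hrpos.le hrle), ← Real.log_inv]
  have h3 : Real.log r⁻¹ ≤ r⁻¹ - 1 := Real.log_le_sub_one_of_pos (inv_pos.mpr hrpos)
  have h5 : 2 / ((4 * (m:ℝ) + 3) * (4 * (m:ℝ) + 6)) ≤ (2 / 9) * (1 / ((m : ℝ) + 1) ^ 2) := by
    rw [show (2 / 9 : ℝ) * (1 / ((m : ℝ) + 1) ^ 2) = 2 / (9 * ((m:ℝ) + 1) ^ 2) by
      rw [div_mul_div_comm, mul_one]]
    rw [div_le_div_iff₀ (by positivity) (by positivity)]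
    nlinarith
  linarith [hrinv ▸ h3]

lemma summable_pair : Summable (fun m : ℕ => tmA (2 * m) + tmA (2 * m + 1)) := by
  have hb : Summable (fun m : ℕ => (2 / 9 : ℝ) * (1 / ((m : ℝ) + 1) ^ 2)) := by
    have h0 : Summable (fun m : ℕ => 1 / ((m : ℝ)) ^ 2) :=
      Real.summable_one_div_nat_pow.mpr one_lt_two
    have h1 : Summable (fun m : ℕ => 1 / ((m : ℝ) + 1) ^ 2) := by
      have := (summable_nat_add_iff 1).mpr h0
      refine this.congr fun m => ?_
      push_cast
      ring
    exact h1.mul_left _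
  refine Summable.of_norm_bounded hb fun m => ?_
  rw [Real.norm_eq_abs]
  exact abs_pair m

lemma tendsto_tmA_two_mul : Tendsto (fun N : ℕ => tmA (2 * N)) atTop (𝓝 0) := by
  refine squeeze_zero_norm (fun N => ?_) tendsto_one_div_add_atTop_nhds_zero_nat
  rw [Real.norm_eq_abs]
  refine le_trans (abs_tmA (2 * N)) ?_
  apply one_div_le_one_div_of_le (by positivity)
  push_cast
  linarith [Nat.cast_nonneg (α := ℝ) N]

lemma tendsto_tmL : Tendsto tmL atTop (𝓝 (∑' m : ℕ, (tmA (2 * m) + tmA (2 * m + 1)))) := by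
  set l := ∑' m : ℕ, (tmA (2 * m) + tmA (2 * m + 1)) with hl
  have he : Tendsto (fun N : ℕ => tmL (2 * N)) atTop (𝓝 l) := by
    have := summable_pair.hasSum.tendsto_sum_nat
    refine this.congr fun N => ?_
    rw [tmL_two_mul]
  have ho : Tendsto (fun N : ℕ => tmL (2 * N + 1)) atTop (𝓝 l) := by
    have h : ∀ N : ℕ, tmL (2 * N + 1) = tmL (2 * N) + tmA (2 * N) := by
      intro N
      unfold tmL
      rw [Finset.sum_range_succ]
    have := he.add tendsto_tmA_two_mul
    rw [add_zero] at this
    exact this.congr fun N => (h N).symm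
  rw [Metric.tendsto_atTop] at he ho ⊢
  intro ε hε
  obtain ⟨N1, h1⟩ := he ε hε
  obtain ⟨N2, h2⟩ := ho ε hε
  refine ⟨2 * (max N1 N2) + 2, fun n hn => ?_⟩
  rcases Nat.even_or_odd n with ⟨k, hk⟩ | ⟨k, hk⟩
  · have : n = 2 * k := by omega
    rw [this]
    exact h1 k (by have := le_max_left N1 N2; omega)
  · have : n = 2 * k + 1 := by omega
    rw [this]
    exact h2 k (by have := le_max_right N1 N2; omega)

theorem prod_f :
    Tendsto (fun N => ∏ n ∈ Finset.range N,
        (((((n : ℝ) + 1) * (4 * (n : ℝ) + 5)) / (((n : ℝ) + 2) * (4 * (n : ℝ) + 3)))) ^ ((-1 : ℤ) ^ tm n))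
      atTop (𝓝 ((1 : ℝ))) := by
  have hdouble : Tendsto (fun N : ℕ => 2 * N) atTop atTop :=
    tendsto_atTop_mono (fun n => by simp only [id_eq]; omega) tendsto_id
  have hdiff : Tendsto (fun N : ℕ => tmL N - tmL (2 * N)) atTop (𝓝 0) := by
    have := tendsto_tmL.sub (tendsto_tmL.comp hdouble)
    rwa [sub_self] at this
  have hexp : Tendsto (fun N : ℕ => Real.exp (tmL N - tmL (2 * N))) atTop (𝓝 1) := by
    have := (Real.continuous_exp.tendsto 0).comp hdiff
    simpa [Function.comp_def] using this
  exact hexp.congr fun N => (prod_eq_exp N).symm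
end

section
/- ∏_{n≥0} [((4n+1)(8n+7)) / ((4n+2)(8n+3))]^{(-1)^{t_n}} = 1. -/
open Filter Finset Topology

lemma eps_two_mul_add_one (n : ℕ) :
    ((-1 : ℤ) ^ tm (2 * n + 1)) = -((-1 : ℤ) ^ tm n) := by
  unfold tm
  rw [Nat.digits_def' (by norm_num : 1 < 2) (by omega : 0 < 2 * n + 1)]
  have h1 : (2 * n + 1) % 2 = 1 := by omega
  have h2 : (2 * n + 1) / 2 = n := by omega
  rw [h1, h2]
  simp only [List.sum_cons]
  rw [← neg_one_pow_eq_pow_mod_two, ← neg_one_pow_eq_pow_mod_two, pow_add, pow_one]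
  ring

noncomputable def ff (n : ℕ) : ℝ :=
  ((4 * (n : ℝ) + 1) * (8 * (n : ℝ) + 7)) / ((4 * (n : ℝ) + 2) * (8 * (n : ℝ) + 3))

noncomputable def hh (n : ℕ) : ℝ := (4 * (n : ℝ) + 2) / (4 * (n : ℝ) + 3)

lemma hh_pos (n : ℕ) : 0 < hh n := by
  unfold hh; positivity

lemma key_alg (n : ℕ) : hh (2 * n) / hh (2 * n + 1) = ff n * hh n := by
  unfold hh ff
  push_cast
  have h3 : (4 * ((n:ℝ) * 2) + 3) ≠ 0 := by positivity
  have h4 : (4 * ((n:ℝ) * 2 + 1) + 2) ≠ 0 := by positivity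
  have h5 : (4 * ((n:ℝ) * 2 + 1) + 3) ≠ 0 := by positivity
  have h6 : (4 * (n:ℝ) + 2) * (8 * (n:ℝ) + 3) ≠ 0 := by positivity
  have h7 : (4 * (n:ℝ) + 3) ≠ 0 := by positivity
  field_simp
  ring

noncomputable def HH (N : ℕ) : ℝ := ∏ n ∈ Finset.range N, hh n ^ ((-1 : ℤ) ^ tm n)

lemma prod_eq_HH (N : ℕ) :
    (∏ n ∈ Finset.range N, ff n ^ ((-1 : ℤ) ^ tm n)) = HH (2 * N) / HH N := by
  induction N with
  | zero => simp [HH]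
  | succ N ih =>
    have h2 : 2 * (N + 1) = (2 * N + 1) + 1 := by ring
    rw [Finset.prod_range_succ, ih, h2]
    simp only [HH]
    rw [Finset.prod_range_succ, Finset.prod_range_succ, Finset.prod_range_succ]
    rw [tm_two_mul, eps_two_mul_add_one, zpow_neg]
    have hkey : hh (2 * N) / hh (2 * N + 1) = ff N * hh N := key_alg N
    have h1 : hh (2 * N) ^ ((-1 : ℤ) ^ tm N) * (hh (2 * N + 1) ^ ((-1 : ℤ) ^ tm N))⁻¹
        = (ff N * hh N) ^ ((-1 : ℤ) ^ tm N) := by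
      rw [← zpow_neg, ← hkey, div_zpow, zpow_neg]
      rfl
    rw [show (∏ n ∈ Finset.range (2 * N), hh n ^ ((-1:ℤ) ^ tm n)) * hh (2*N) ^ ((-1:ℤ) ^ tm N)
        * (hh (2*N+1) ^ ((-1:ℤ) ^ tm N))⁻¹
        = (∏ n ∈ Finset.range (2 * N), hh n ^ ((-1:ℤ) ^ tm n)) *
          (hh (2*N) ^ ((-1:ℤ) ^ tm N) * (hh (2*N+1) ^ ((-1:ℤ) ^ tm N))⁻¹) from by ring,
      h1, mul_zpow]
    have hHpos : (0:ℝ) < ∏ n ∈ Finset.range N, hh n ^ ((-1:ℤ) ^ tm n) := by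
      apply Finset.prod_pos; intro i _; exact zpow_pos (hh_pos i) _
    have hhNpos := hh_pos N
    have hz : hh N ^ ((-1:ℤ) ^ tm N) ≠ 0 := ne_of_gt (zpow_pos hhNpos _)
    field_simp

noncomputable def aa (n : ℕ) : ℝ := Real.log (hh n) * (((-1 : ℤ) ^ tm n : ℤ) : ℝ)

noncomputable def SS (N : ℕ) : ℝ := ∑ n ∈ Finset.range N, aa n

lemma abs_epsR (n : ℕ) : |(((-1 : ℤ) ^ tm n : ℤ) : ℝ)| = 1 := by
  push_cast
  rw [abs_pow, abs_neg, abs_one, one_pow]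

lemma HH_eq_exp (N : ℕ) : HH N = Real.exp (SS N) := by
  rw [SS, Real.exp_sum, HH]
  refine Finset.prod_congr rfl fun n _ => ?_
  rw [← Real.rpow_intCast, Real.rpow_def_of_pos (hh_pos n), aa]

noncomputable def bb (k : ℕ) : ℝ := Real.log (ff k * hh k) * (((-1 : ℤ) ^ tm k : ℤ) : ℝ)

lemma aa_pair (k : ℕ) : aa (2 * k) + aa (2 * k + 1) = bb k := by
  unfold aa bb
  rw [tm_two_mul, eps_two_mul_add_one, ← key_alg,
    Real.log_div (ne_of_gt (hh_pos _)) (ne_of_gt (hh_pos _))]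
  push_cast
  ring

lemma ffhh_eq (k : ℕ) : ff k * hh k
    = ((8 * (k:ℝ) + 2) * (8 * (k:ℝ) + 7)) / ((8 * (k:ℝ) + 3) * (8 * (k:ℝ) + 6)) := by
  unfold ff hh
  have h1 : ((4 * (k:ℝ) + 2) * (8 * (k:ℝ) + 3)) ≠ 0 := by positivity
  have h2 : (4 * (k:ℝ) + 3) ≠ 0 := by positivity
  have h3 : ((8 * (k:ℝ) + 3) * (8 * (k:ℝ) + 6)) ≠ 0 := by positivity
  field_simp
  ring

lemma bb_bound (k : ℕ) : |bb k| ≤ 1 / ((k : ℝ) + 1) ^ 2 := by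
  have hx : (0:ℝ) ≤ (k:ℝ) := Nat.cast_nonneg k
  have hnum : (0:ℝ) < (8 * (k:ℝ) + 2) * (8 * (k:ℝ) + 7) := by positivity
  have hden : (0:ℝ) < (8 * (k:ℝ) + 3) * (8 * (k:ℝ) + 6) := by positivity
  have hc : (0:ℝ) < ff k * hh k := by rw [ffhh_eq]; positivity
  have hle1 : ff k * hh k ≤ 1 := by
    rw [ffhh_eq, div_le_one hden]; nlinarith
  have hlog_nonpos : Real.log (ff k * hh k) ≤ 0 := Real.log_nonpos (le_of_lt hc) hle1
  have habs : |bb k| = -Real.log (ff k * hh k) := by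
    rw [bb, abs_mul, abs_epsR, mul_one, abs_of_nonpos hlog_nonpos]
  rw [habs]
  have hinv : -Real.log (ff k * hh k) ≤ (ff k * hh k)⁻¹ - 1 := by
    have := Real.log_le_sub_one_of_pos (inv_pos.mpr hc)
    rw [Real.log_inv] at this
    linarith
  refine hinv.trans ?_
  rw [ffhh_eq, inv_div, div_sub_one (ne_of_gt hnum), div_le_div_iff₀ hnum (by positivity)]
  nlinarith

lemma bb_summable : Summable bb := by
  rw [← summable_abs_iff]
  refine Summable.of_nonneg_of_le (fun k => abs_nonneg _) bb_bound ?_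
  have h := (Real.summable_one_div_nat_pow (p := 2)).mpr (by norm_num)
  have := (summable_nat_add_iff 1).mpr h
  simpa using this

lemma SS_even (N : ℕ) : SS (2 * N) = ∑ k ∈ Finset.range N, bb k := by
  induction N with
  | zero => simp [SS]
  | succ N ih =>
    have h2 : 2 * (N + 1) = 2 * N + 1 + 1 := by ring
    rw [Finset.sum_range_succ, ← ih, SS, SS, h2, Finset.sum_range_succ,
      Finset.sum_range_succ, ← aa_pair]
    ring

lemma hh_tendsto : Tendsto hh atTop (𝓝 1) := by
  have heq : ∀ n : ℕ, hh n = 1 - 1 / (4 * (n:ℝ) + 3) := by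
    intro n
    have : (4 * (n:ℝ) + 3) ≠ 0 := by positivity
    rw [hh]
    field_simp
    ring
  have h0 : Tendsto (fun n : ℕ => 1 / (4 * (n:ℝ) + 3)) atTop (𝓝 0) := by
    refine squeeze_zero' ?_ ?_ tendsto_one_div_atTop_nhds_zero_nat
    · exact Eventually.of_forall fun n => by positivity
    · filter_upwards [eventually_ge_atTop 1] with n hn
      apply one_div_le_one_div_of_le
      · exact_mod_cast Nat.succ_le_of_lt (Nat.lt_of_lt_of_le Nat.zero_lt_one hn)
      · have : (1:ℝ) ≤ (n:ℝ) := by exact_mod_cast hn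
        linarith
  have h1 : Tendsto (fun n : ℕ => 1 - 1 / (4 * (n:ℝ) + 3)) atTop (𝓝 (1 - 0)) :=
    tendsto_const_nhds.sub h0
  rw [sub_zero] at h1
  exact h1.congr fun n => (heq n).symm

lemma log_hh_tendsto : Tendsto (fun n => Real.log (hh n)) atTop (𝓝 0) := by
  have := hh_tendsto.log one_ne_zero
  simpa using this

lemma aa_tendsto : Tendsto aa atTop (𝓝 0) := by
  have habs : Tendsto (fun n => |Real.log (hh n)|) atTop (𝓝 0) := by
    have := log_hh_tendsto.abs
    simpa using this
  refine squeeze_zero_norm (fun n => ?_) habs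
  rw [aa, Real.norm_eq_abs, abs_mul, abs_epsR, mul_one]

noncomputable def TT : ℝ := ∑' k, bb k

lemma SS_tendsto : Tendsto SS atTop (𝓝 TT) := by
  have heven : Tendsto (fun N => SS (2 * N)) atTop (𝓝 TT) := by
    have := bb_summable.hasSum.tendsto_sum_nat
    exact this.congr fun N => (SS_even N).symm
  have hdiv : Tendsto (fun n : ℕ => n / 2) atTop atTop :=
    tendsto_atTop.2 fun b => eventually_atTop.2 ⟨2 * b, fun n hn => by omega⟩
  have hinner : Tendsto (fun N => |SS (2 * N) - TT| + |aa (2 * N)|) atTop (𝓝 0) := by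
    have h1 : Tendsto (fun N => |SS (2 * N) - TT|) atTop (𝓝 0) := by
      have := (heven.sub_const TT).abs
      simpa using this
    have htwo : Tendsto (fun N : ℕ => 2 * N) atTop atTop :=
      tendsto_atTop.2 fun b => eventually_atTop.2 ⟨b, fun n hn => by omega⟩
    have h2 : Tendsto (fun N : ℕ => |aa (2 * N)|) atTop (𝓝 0) := by
      have := (aa_tendsto.comp htwo).abs
      simpa using this
    have := h1.add h2
    simpa using this
  have hcomp : Tendsto (fun n : ℕ => |SS (2 * (n / 2)) - TT| + |aa (2 * (n / 2))|)
      atTop (𝓝 0) := hinner.comp hdiv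
  have hbound : ∀ n, |SS n - TT| ≤ |SS (2 * (n / 2)) - TT| + |aa (2 * (n / 2))| := by
    intro n
    rcases Nat.even_or_odd n with ⟨k, hk⟩ | ⟨k, hk⟩
    · have h : 2 * (n / 2) = n := by omega
      rw [h]
      exact le_add_of_nonneg_right (abs_nonneg _)
    · have h : n / 2 = k := by omega
      have hn : n = 2 * k + 1 := by omega
      rw [h, hn]
      have hS : SS (2 * k + 1) = SS (2 * k) + aa (2 * k) := by
        rw [SS, SS, Finset.sum_range_succ]
      rw [hS, show SS (2 * k) + aa (2 * k) - TT = (SS (2 * k) - TT) + aa (2 * k) from by ring]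
      exact abs_add_le _ _
  have habs0 : Tendsto (fun n => |SS n - TT|) atTop (𝓝 0) :=
    squeeze_zero (fun n => abs_nonneg _) hbound hcomp
  rw [show (SS : ℕ → ℝ) = fun n => (SS n - TT) + TT from funext fun n => by ring]
  have : Tendsto (fun n => SS n - TT) atTop (𝓝 0) :=
    squeeze_zero_norm (fun n => le_of_eq (Real.norm_eq_abs _)) habs0
  simpa using this.add_const TT

theorem prod_k :
    Tendsto (fun N => ∏ n ∈ Finset.range N,
        ((((4 * (n : ℝ) + 1) * (8 * (n : ℝ) + 7)) / ((4 * (n : ℝ) + 2) * (8 * (n : ℝ) + 3)))) ^ ((-1 : ℤ) ^ tm n))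
      atTop (𝓝 ((1 : ℝ))) := by
  have hHH : Tendsto HH atTop (𝓝 (Real.exp TT)) := by
    have := SS_tendsto.comp (tendsto_id (α := ℕ))
    have h := Real.continuous_exp.continuousAt.tendsto.comp SS_tendsto
    exact h.congr fun N => (HH_eq_exp N).symm
  have htwo : Tendsto (fun N : ℕ => 2 * N) atTop atTop :=
    tendsto_atTop.2 fun b => eventually_atTop.2 ⟨b, fun n hn => by omega⟩
  have hH2 : Tendsto (fun N => HH (2 * N)) atTop (𝓝 (Real.exp TT)) := hHH.comp htwo
  have hdiv := hH2.div hHH (Real.exp_ne_zero TT)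
  rw [div_self (Real.exp_ne_zero TT)] at hdiv
  exact hdiv.congr fun N => (prod_eq_HH N).symm
end

section
/- ∏_{n≥0} [((8n+1)(8n+7)) / ((8n+3)(8n+5))]^{(-1)^{t_n}} = 1/2. -/
open Filter Finset Topology

noncomputable section ProdLSection

namespace ProdLAux

/-- the sign `(-1)^{t_n}` as a real number -/
def e (n : ℕ) : ℝ := (-1) ^ tm n

/-- `L n = log n` -/
def L (n : ℕ) : ℝ := Real.log n

def A (n : ℕ) : ℝ := e n * (L (4*n+1) - L (4*n+2) - L (4*n+3) + L (4*n+4))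

def B (n : ℕ) : ℝ := e n * (L (2*n) - 2 * L (2*n+1) + L (2*n+2))

lemma tm_two_mul (n : ℕ) : tm (2*n) = tm n := by
  rcases Nat.eq_zero_or_pos n with h | h
  · simp [h]
  · unfold tm
    rw [Nat.digits_def' (by norm_num : 1 < 2) (by omega)]
    simp

lemma tm_two_mul_add_one (n : ℕ) : tm (2*n+1) = (1 + tm n) % 2 := by
  unfold tm
  rw [Nat.digits_def' (by norm_num : 1 < 2) (by omega)]
  have h1 : (2*n+1) % 2 = 1 := by omega
  have h2 : (2*n+1) / 2 = n := by omega
  rw [h1, h2]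
  simp [Nat.add_mod]

lemma tm_cases (n : ℕ) : tm n = 0 ∨ tm n = 1 := Nat.mod_two_eq_zero_or_one _

lemma e_two_mul (n : ℕ) : e (2*n) = e n := by unfold e; rw [tm_two_mul]

lemma e_two_mul_add_one (n : ℕ) : e (2*n+1) = - e n := by
  unfold e
  rw [tm_two_mul_add_one]
  rcases tm_cases n with h | h <;> rw [h] <;> norm_num

lemma abs_e (n : ℕ) : |e n| = 1 := by
  unfold e
  rw [abs_pow, abs_neg, abs_one, one_pow]

lemma L_two_mul (k : ℕ) (hk : k ≠ 0) : L (2*k) = Real.log 2 + L k := by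
  unfold L
  push_cast
  rw [Real.log_mul (by norm_num) (by exact_mod_cast hk)]

lemma sum_range_two_mul (a : ℕ → ℝ) (N : ℕ) :
    ∑ m ∈ range (2*N), a m = ∑ n ∈ range N, (a (2*n) + a (2*n+1)) := by
  induction N with
  | zero => simp
  | succ N ih =>
      rw [Nat.mul_succ, Finset.sum_range_succ, Finset.sum_range_succ,
        Finset.sum_range_succ, ih]
      ring

/-- `F n` is the factor of the product. -/
def F (n : ℕ) : ℝ :=
  ((8 * (n : ℝ) + 1) * (8 * (n : ℝ) + 7)) / ((8 * (n : ℝ) + 3) * (8 * (n : ℝ) + 5))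

lemma F_pos (n : ℕ) : 0 < F n := by
  unfold F
  have : (0:ℝ) ≤ n := Nat.cast_nonneg n
  positivity

lemma log_F (n : ℕ) : Real.log (F n) = L (8*n+1) + L (8*n+7) - L (8*n+3) - L (8*n+5) := by
  have h : (0:ℝ) ≤ n := Nat.cast_nonneg n
  unfold F L
  push_cast
  rw [Real.log_div (by positivity) (by positivity),
    Real.log_mul (by positivity) (by positivity),
    Real.log_mul (by positivity) (by positivity)]
  ring

lemma keyA (n : ℕ) : e n * Real.log (F n) = A (2*n) + A (2*n+1) + A n := by
  have d1 : L (8*n+2) = Real.log 2 + L (4*n+1) := by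
    have := L_two_mul (4*n+1) (by omega); rw [show 2*(4*n+1) = 8*n+2 by ring] at this
    exact this
  have d2 : L (8*n+4) = Real.log 2 + L (4*n+2) := by
    have := L_two_mul (4*n+2) (by omega); rw [show 2*(4*n+2) = 8*n+4 by ring] at this
    exact this
  have d3 : L (8*n+6) = Real.log 2 + L (4*n+3) := by
    have := L_two_mul (4*n+3) (by omega); rw [show 2*(4*n+3) = 8*n+6 by ring] at this
    exact this
  have d4 : L (8*n+8) = Real.log 2 + L (4*n+4) := by
    have := L_two_mul (4*n+4) (by omega); rw [show 2*(4*n+4) = 8*n+8 by ring] at this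
    exact this
  simp only [A, e_two_mul, e_two_mul_add_one, log_F]
  rw [show 4*(2*n)+1 = 8*n+1 by ring, show 4*(2*n)+2 = 8*n+2 by ring,
    show 4*(2*n)+3 = 8*n+3 by ring, show 4*(2*n)+4 = 8*n+4 by ring,
    show 4*(2*n+1)+1 = 8*n+5 by ring, show 4*(2*n+1)+2 = 8*n+6 by ring,
    show 4*(2*n+1)+3 = 8*n+7 by ring, show 4*(2*n+1)+4 = 8*n+8 by ring,
    d1, d2, d3, d4]
  ring

lemma keyB (n : ℕ) (hn : n ≠ 0) : B (2*n) + B (2*n+1) = B n - 2 * A n := by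
  have d0 : L (4*n) = Real.log 2 + L (2*n) := by
    have := L_two_mul (2*n) (by omega); rw [show 2*(2*n) = 4*n by ring] at this
    exact this
  have d2 : L (4*n+2) = Real.log 2 + L (2*n+1) := by
    have := L_two_mul (2*n+1) (by omega); rw [show 2*(2*n+1) = 4*n+2 by ring] at this
    exact this
  have d4 : L (4*n+4) = Real.log 2 + L (2*n+2) := by
    have := L_two_mul (2*n+2) (by omega); rw [show 2*(2*n+2) = 4*n+4 by ring] at this
    exact this
  simp only [B, A, e_two_mul, e_two_mul_add_one,
    show 2*(2*n) = 4*n from by ring, show 2*(2*n+1) = 4*n+2 from by ring,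
    show 4*n+2+1 = 4*n+3 from by ring, show 4*n+2+2 = 4*n+4 from by ring]
  rw [d0, d2, d4]
  ring

lemma e_zero : e 0 = 1 := by simp [e, tm]

lemma e_one : e 1 = -1 := by
  have : tm 1 = 1 := by simp [tm]
  simp [e, this]

lemma L_zero : L 0 = 0 := by simp [L]

lemma L_one : L 1 = 0 := by simp [L]

lemma L_two : L 2 = Real.log 2 := by norm_num [L]

lemma L_four : L 4 = 2 * Real.log 2 := by
  have := L_two_mul 2 (by norm_num)
  rw [show 2*2 = 4 by norm_num, L_two] at this
  rw [this]; ring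

lemma keyB0 : B 0 + B 1 = B 0 - 2 * A 0 - Real.log 2 := by
  simp only [B, A, e_zero, e_one]
  norm_num
  rw [L_zero, L_one, L_two, L_four]
  ring

/-- the exact finite Robbins-type identity -/
lemma robbins (N : ℕ) :
    ∑ m ∈ range (2*(N+1)), B m
      = ∑ n ∈ range (N+1), B n - 2 * ∑ n ∈ range (N+1), A n - Real.log 2 := by
  induction N with
  | zero =>
      norm_num [Finset.sum_range_succ]
      linarith [keyB0]
  | succ N ih =>
      rw [show 2*(N+1+1) = 2*(N+1)+1+1 by ring, Finset.sum_range_succ,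
        Finset.sum_range_succ, ih, Finset.sum_range_succ (f := B) (n := N+1),
        Finset.sum_range_succ (f := A) (n := N+1)]
      have hk := keyB (N+1) (by omega)
      linarith [hk]

lemma abs_log_le {x : ℝ} (h1 : 1/2 ≤ x) (h2 : x ≤ 1) : |Real.log x| ≤ 2*(1-x) := by
  have hx : 0 < x := by linarith
  have hlog : Real.log x ≤ 0 := Real.log_nonpos (by linarith) h2
  rw [abs_of_nonpos hlog]
  have hinv : Real.log x⁻¹ ≤ x⁻¹ - 1 := Real.log_le_sub_one_of_pos (by positivity)
  rw [Real.log_inv] at hinv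
  have he : x⁻¹ - 1 = (1-x)/x := by field_simp
  rw [he] at hinv
  have : (1-x)/x ≤ 2*(1-x) := by
    rw [div_le_iff₀ hx]
    nlinarith
  linarith

lemma summable_sq : Summable (fun n : ℕ => 4 / ((n:ℝ)+1)^2) := by
  have h0 : Summable (fun n : ℕ => 1/(n:ℝ)^2) :=
    Real.summable_one_div_nat_pow.mpr one_lt_two
  have h1 : Summable (fun n : ℕ => 1/((n:ℝ)+1)^2) := by
    have h2 := (summable_nat_add_iff 1).mpr h0
    apply h2.congr
    intro n
    push_cast
    ring
  have h3 := h1.mul_left 4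
  apply h3.congr
  intro n
  ring

lemma hA_bound (n : ℕ) : |A n| ≤ 4 / ((n:ℝ)+1)^2 := by
  have ht : (0:ℝ) ≤ (n:ℝ) := Nat.cast_nonneg n
  set t := (n:ℝ) with hts
  have hlog : L (4*n+1) - L (4*n+2) - L (4*n+3) + L (4*n+4)
      = Real.log (((4*t+1)*(4*t+4))/((4*t+2)*(4*t+3))) := by
    unfold L
    push_cast
    rw [Real.log_div (by positivity) (by positivity),
      Real.log_mul (by positivity) (by positivity),
      Real.log_mul (by positivity) (by positivity)]
    ring
  set x := ((4*t+1)*(4*t+4))/((4*t+2)*(4*t+3)) with hxs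
  have hden : (0:ℝ) < (4*t+2)*(4*t+3) := by positivity
  have hx1 : 1/2 ≤ x := by
    rw [hxs, le_div_iff₀ hden]
    nlinarith
  have hx2 : x ≤ 1 := by
    rw [hxs, div_le_one hden]
    nlinarith
  have h1x : 1 - x = 2/((4*t+2)*(4*t+3)) := by
    rw [hxs]
    field_simp
    ring
  have hbd : 2*(1-x) ≤ 4/((t:ℝ)+1)^2 := by
    rw [h1x, show 2*(2/((4*t+2)*(4*t+3))) = 4/((4*t+2)*(4*t+3)) from by ring,
      div_le_div_iff₀ (by positivity) (by positivity)]
    nlinarith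
  calc |A n| = |e n| * |L (4*n+1) - L (4*n+2) - L (4*n+3) + L (4*n+4)| := abs_mul _ _
    _ = |Real.log x| := by rw [abs_e, one_mul, hlog]
    _ ≤ 2*(1-x) := abs_log_le hx1 hx2
    _ ≤ 4/((t:ℝ)+1)^2 := hbd

lemma B_zero : B 0 = Real.log 2 := by
  simp only [B, e_zero]
  norm_num
  rw [L_zero, L_one, L_two]
  ring

lemma hB_bound (n : ℕ) : |B n| ≤ 4 / ((n:ℝ)+1)^2 := by
  rcases Nat.eq_zero_or_pos n with h | h
  · subst h
    rw [B_zero]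
    have h1 : Real.log 2 ≤ 1 := by
      have := Real.log_le_sub_one_of_pos (by norm_num : (0:ℝ) < 2)
      linarith
    have h2 : (0:ℝ) ≤ Real.log 2 := Real.log_nonneg (by norm_num)
    rw [abs_of_nonneg h2]
    norm_num
    linarith
  · have ht1 : (1:ℝ) ≤ (n:ℝ) := by exact_mod_cast h
    set t := (n:ℝ) with hts
    have ht0 : (0:ℝ) < t := by linarith
    have c1 : ((2*n : ℕ):ℝ) = 2*t := by push_cast; ring
    have c2 : ((2*n+1 : ℕ):ℝ) = 2*t+1 := by push_cast; ring
    have c3 : ((2*n+2 : ℕ):ℝ) = 2*t+2 := by push_cast; ring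
    have e1 : Real.log (2*t*(2*t+2)) = Real.log (2*t) + Real.log (2*t+2) :=
      Real.log_mul (by positivity) (by positivity)
    have e2 : Real.log ((2*t+1)*(2*t+1)) = Real.log (2*t+1) + Real.log (2*t+1) :=
      Real.log_mul (by positivity) (by positivity)
    have hlog : L (2*n) - 2 * L (2*n+1) + L (2*n+2)
        = Real.log ((2*t*(2*t+2))/((2*t+1)*(2*t+1))) := by
      unfold L
      rw [c1, c2, c3, Real.log_div (by positivity) (by positivity), e1, e2]
      ring
    set x := (2*t*(2*t+2))/((2*t+1)*(2*t+1)) with hxs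
    have hden : (0:ℝ) < (2*t+1)*(2*t+1) := by positivity
    have hx1 : 1/2 ≤ x := by
      rw [hxs, le_div_iff₀ hden]
      nlinarith
    have hx2 : x ≤ 1 := by
      rw [hxs, div_le_one hden]
      nlinarith
    have h1x : 1 - x = 1/((2*t+1)*(2*t+1)) := by
      rw [hxs]
      field_simp
      ring
    have hbd : 2*(1-x) ≤ 4/((t:ℝ)+1)^2 := by
      rw [h1x, show 2*(1/((2*t+1)*(2*t+1))) = 2/((2*t+1)*(2*t+1)) from by ring,
        div_le_div_iff₀ (by positivity) (by positivity)]
      nlinarith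
    calc |B n| = |e n| * |L (2*n) - 2 * L (2*n+1) + L (2*n+2)| := abs_mul _ _
      _ = |Real.log x| := by rw [abs_e, one_mul, hlog]
      _ ≤ 2*(1-x) := abs_log_le hx1 hx2
      _ ≤ 4/((t:ℝ)+1)^2 := hbd

lemma summable_A : Summable A := by
  have h : Summable (fun n => |A n|) :=
    Summable.of_nonneg_of_le (fun n => abs_nonneg _) hA_bound summable_sq
  exact h.of_abs

lemma summable_B : Summable B := by
  have h : Summable (fun n => |B n|) :=
    Summable.of_nonneg_of_le (fun n => abs_nonneg _) hB_bound summable_sq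
  exact h.of_abs

end ProdLAux

end ProdLSection

theorem prod_l :
    Tendsto (fun N => ∏ n ∈ Finset.range N,
        ((((8 * (n : ℝ) + 1) * (8 * (n : ℝ) + 7)) / ((8 * (n : ℝ) + 3) * (8 * (n : ℝ) + 5)))) ^ ((-1 : ℤ) ^ tm n))
      atTop (𝓝 ((1 / 2 : ℝ))) := by
  open ProdLAux in
  show Tendsto (fun N => ∏ n ∈ Finset.range N,
      (ProdLAux.F n) ^ ((-1 : ℤ) ^ tm n)) atTop (𝓝 ((1 / 2 : ℝ)))
  set a := ∑' n, ProdLAux.A n with ha_def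
  set b := ∑' n, ProdLAux.B n with hb_def
  have hSA : Tendsto (fun N => ∑ n ∈ range N, ProdLAux.A n) atTop (𝓝 a) :=
    ProdLAux.summable_A.hasSum.tendsto_sum_nat
  have hSB : Tendsto (fun N => ∑ n ∈ range N, ProdLAux.B n) atTop (𝓝 b) :=
    ProdLAux.summable_B.hasSum.tendsto_sum_nat
  have htend2 : Tendsto (fun N : ℕ => 2*N) atTop atTop :=
    Filter.tendsto_atTop_atTop.mpr (fun b => ⟨b, fun a hab => by omega⟩)
  have htend2' : Tendsto (fun N : ℕ => 2*(N+1)) atTop atTop :=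
    Filter.tendsto_atTop_atTop.mpr (fun b => ⟨b, fun a hab => by omega⟩)
  have htend1 : Tendsto (fun N : ℕ => N+1) atTop atTop :=
    Filter.tendsto_atTop_atTop.mpr (fun b => ⟨b, fun a hab => by omega⟩)
  -- Robbins identity in the limit : b = b - 2a - log 2
  have h1 : Tendsto (fun N : ℕ => ∑ m ∈ range (2*(N+1)), ProdLAux.B m) atTop (𝓝 b) :=
    hSB.comp htend2'
  have h2 : Tendsto (fun N : ℕ => ∑ n ∈ range (N+1), ProdLAux.B n
      - 2 * ∑ n ∈ range (N+1), ProdLAux.A n - Real.log 2) atTop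
      (𝓝 (b - 2*a - Real.log 2)) :=
    (((hSB.comp htend1).sub ((hSA.comp htend1).const_mul 2)).sub_const _)
  have hEq : b = b - 2*a - Real.log 2 := by
    refine tendsto_nhds_unique ?_ h2
    exact h1.congr (fun N => ProdLAux.robbins N)
  have ha : a = -Real.log 2 / 2 := by linarith
  -- the partial sums of the target log-series
  have hkey : ∀ N, ∑ n ∈ range N, ProdLAux.e n * Real.log (ProdLAux.F n)
      = (∑ m ∈ range (2*N), ProdLAux.A m) + ∑ n ∈ range N, ProdLAux.A n := by
    intro N
    rw [ProdLAux.sum_range_two_mul ProdLAux.A N, ← Finset.sum_add_distrib]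
    apply Finset.sum_congr rfl
    intro n _
    rw [ProdLAux.keyA n]
  have hLf : Tendsto (fun N => ∑ n ∈ range N, ProdLAux.e n * Real.log (ProdLAux.F n))
      atTop (𝓝 (-Real.log 2)) := by
    have h4 : Tendsto (fun N => (∑ m ∈ range (2*N), ProdLAux.A m)
        + ∑ n ∈ range N, ProdLAux.A n) atTop (𝓝 (a + a)) :=
      (hSA.comp htend2).add hSA
    have haa : a + a = -Real.log 2 := by rw [ha]; ring
    rw [haa] at h4
    exact h4.congr (fun N => (hkey N).symm)
  have hprod : ∀ N, (∏ n ∈ range N, (ProdLAux.F n) ^ ((-1:ℤ) ^ tm n))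
      = Real.exp (∑ n ∈ range N, ProdLAux.e n * Real.log (ProdLAux.F n)) := by
    intro N
    rw [Real.exp_sum]
    apply Finset.prod_congr rfl
    intro n _
    rcases ProdLAux.tm_cases n with h | h
    · rw [h]
      simp only [pow_zero, zpow_one, ProdLAux.e, h, one_mul]
      rw [Real.exp_log (ProdLAux.F_pos n)]
    · rw [h]
      simp only [pow_one, ProdLAux.e, h]
      rw [zpow_neg_one, neg_one_mul, Real.exp_neg, Real.exp_log (ProdLAux.F_pos n)]
  have h5 : Tendsto (fun N => Real.exp (∑ n ∈ range N,
      ProdLAux.e n * Real.log (ProdLAux.F n))) atTop (𝓝 (Real.exp (-Real.log 2))) :=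
    (Real.continuous_exp.tendsto _).comp hLf
  rw [Real.exp_neg, Real.exp_log (by norm_num : (0:ℝ) < 2)] at h5
  have h6 : ((2:ℝ))⁻¹ = 1/2 := by norm_num
  rw [h6] at h5
  exact h5.congr (fun N => (hprod N).symm)
end
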